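/- Smoothing preserves the one-component ascending property (auxiliary claim in the proof of the Lemma of Section 5.1): Let G be a one-circle based Gauss diagram with n ≥ 2 arrows which is one-component and ascending, and let x be any arrow of G. Then the smoothing of G along x is a two-circle based Gauss diagram (with n−1 arrows) which is again one-component and ascending; in particular each of the two resulting circles carries at least one endpoint. -/

import Mathlib

open Finset

/-- The cyclic successor on `Fin m`. -/
def cycSucc {m : ℕ} (x : Fin m) : Fin m :=
  ⟨((x : ℕ) + 1) % m, Nat.mod_lt _ x.pos⟩

/-- A based Gauss diagram on one circle with `n` arrows: the `2n` endpoint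
positions are read counterclockwise starting just after the base point;
`t i` is the tail and `h i` the head of arrow `i`, all endpoints are pairwise
distinct, and `ε i ∈ {1, -1}` is the sign of arrow `i`. -/
structure GaussDiagram (n : ℕ) where
  t : Fin n → Fin (2 * n)
  h : Fin n → Fin (2 * n)
  inj : Function.Injective (Sum.elim t h)
  ε : Fin n → ℤ
  sign : ∀ i, ε i = 1 ∨ ε i = -1

namespace GaussDiagram

variable {n : ℕ}

/-- The bijection between arrow-ends and endpoint positions. -/
noncomputable def ends (G : GaussDiagram n) : (Fin n ⊕ Fin n) ≃ Fin (2 * n) :=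
  Equiv.ofBijective (Sum.elim G.t G.h)
    ((Fintype.bijective_iff_injective_and_card _).mpr ⟨G.inj, by simp [two_mul]⟩)

/-- The involution `μ` exchanging the tail and the head of each arrow. -/
noncomputable def mu (G : GaussDiagram n) (x : Fin (2 * n)) : Fin (2 * n) :=
  G.ends (Sum.swap (G.ends.symm x))

/-- `σ x = μ x + 1 (mod 2n)`. -/
noncomputable def sigma (G : GaussDiagram n) (x : Fin (2 * n)) : Fin (2 * n) :=
  ⟨((G.mu x : ℕ) + 1) % (2 * n), Nat.mod_lt _ x.pos⟩

/-- `G` is one-component iff `σ` is a single cycle of length `2n`,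
i.e. the `σ`-orbit of any position is everything. -/
def OneComponent (G : GaussDiagram n) : Prop :=
  ∀ x y : Fin (2 * n), ∃ k : ℕ, (G.sigma)^[k] x = y

open Classical in
/-- The visit time of a position: the least `k` with `σ^[k] 0 = x`
(junk value `0` if there is none). -/
noncomputable def tau (G : GaussDiagram n) (x : Fin (2 * n)) : ℕ :=
  if hx : ∃ k : ℕ, (G.sigma)^[k] ⟨0, x.pos⟩ = x then Nat.find hx else 0

/-- `G` is ascending iff for every arrow the tail is visited before the head. -/
def Ascending (G : GaussDiagram n) : Prop :=
  ∀ i : Fin n, G.tau (G.t i) < G.tau (G.h i)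

lemma t_injective (G : GaussDiagram n) : Function.Injective G.t := fun i j hij => by
  have := @G.inj (Sum.inl i) (Sum.inl j) hij
  simpa using this

lemma h_injective (G : GaussDiagram n) : Function.Injective G.h := fun i j hij => by
  have := @G.inj (Sum.inr i) (Sum.inr j) hij
  simpa using this

lemma t_ne_h (G : GaussDiagram n) (i j : Fin n) : G.t i ≠ G.h j := fun e => by
  have := @G.inj (Sum.inl i) (Sum.inr j) e
  simp at this

/-- The set of endpoint positions of the arrows in `S`. -/
def posSet (G : GaussDiagram n) (S : Finset (Fin n)) : Finset (Fin (2 * n)) :=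
  S.image G.t ∪ S.image G.h

lemma posSet_card (G : GaussDiagram n) (S : Finset (Fin n)) :
    (G.posSet S).card = 2 * S.card := by
  rw [posSet, card_union_of_disjoint, card_image_of_injective _ G.t_injective,
    card_image_of_injective _ G.h_injective, two_mul]
  rw [disjoint_left]
  rintro a ha hb
  simp only [mem_image] at ha hb
  obtain ⟨i, -, rfl⟩ := ha
  obtain ⟨j, -, hj⟩ := hb
  exact G.t_ne_h i j hj.symm

lemma mem_posSet_t (G : GaussDiagram n) {S : Finset (Fin n)} {i : Fin n} (hi : i ∈ S) :
    G.t i ∈ G.posSet S := mem_union_left _ (mem_image_of_mem _ hi)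

lemma mem_posSet_h (G : GaussDiagram n) {S : Finset (Fin n)} {i : Fin n} (hi : i ∈ S) :
    G.h i ∈ G.posSet S := mem_union_right _ (mem_image_of_mem _ hi)

/-- The sub-diagram consisting of the arrows of `S` alone, with the endpoint
positions renumbered preserving their order. -/
noncomputable def sub (G : GaussDiagram n) (S : Finset (Fin n)) : GaussDiagram S.card where
  t j := ((G.posSet S).orderIsoOfFin (G.posSet_card S)).symm
    ⟨G.t (S.orderIsoOfFin rfl j), G.mem_posSet_t (S.orderIsoOfFin rfl j).2⟩
  h j := ((G.posSet S).orderIsoOfFin (G.posSet_card S)).symm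
    ⟨G.h (S.orderIsoOfFin rfl j), G.mem_posSet_h (S.orderIsoOfFin rfl j).2⟩
  ε j := G.ε (S.orderIsoOfFin rfl j)
  sign j := G.sign _
  inj := by
    have hP : Function.Injective ((G.posSet S).orderIsoOfFin (G.posSet_card S)).symm :=
      (OrderIso.injective _)
    have hA : Function.Injective (S.orderIsoOfFin rfl) := OrderIso.injective _
    rintro (i | i) (j | j) hij <;> simp only [Sum.elim_inl, Sum.elim_inr] at hij <;>
      have h1 := congrArg Subtype.val (hP hij)
    · have h2 := @G.inj (Sum.inl (S.orderIsoOfFin rfl i))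
        (Sum.inl (S.orderIsoOfFin rfl j)) h1
      simp only [Sum.inl.injEq] at h2
      exact congrArg Sum.inl (hA (Subtype.ext h2))
    · have h2 := @G.inj (Sum.inl (S.orderIsoOfFin rfl i))
        (Sum.inr (S.orderIsoOfFin rfl j)) h1
      simp at h2
    · have h2 := @G.inj (Sum.inr (S.orderIsoOfFin rfl i))
        (Sum.inl (S.orderIsoOfFin rfl j)) h1
      simp at h2
    · have h2 := @G.inj (Sum.inr (S.orderIsoOfFin rfl i))
        (Sum.inr (S.orderIsoOfFin rfl j)) h1
      simp only [Sum.inr.injEq] at h2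
      exact congrArg Sum.inr (hA (Subtype.ext h2))

/-- A subset `S` of the arrows is one-component if the sub-diagram on `S` is. -/
def OneComponentSub (G : GaussDiagram n) (S : Finset (Fin n)) : Prop :=
  (G.sub S).OneComponent

/-- A subset `S` of the arrows is ascending if the sub-diagram on `S` is. -/
def AscendingSub (G : GaussDiagram n) (S : Finset (Fin n)) : Prop :=
  (G.sub S).Ascending

open Classical in
/-- `F k G` is the sum over all one-component ascending subsets `S` of the
arrows with `|S| = k` of the product of the signs of the arrows in `S`. -/
noncomputable def F (G : GaussDiagram n) (k : ℕ) : ℤ :=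
  ∑ S : Finset (Fin n),
    if S.card = k ∧ G.OneComponentSub S ∧ G.AscendingSub S then ∏ i ∈ S, G.ε i else 0

end GaussDiagram

/-- A based Gauss diagram on two circles with `n` arrows and endpoint
distribution `(p, q)`: `p` endpoint positions on the first (based) circle and
`q` on the second, with `p + q = 2n`; `t i` is the tail and `h i` the head of
arrow `i`, all endpoints occur exactly once, and `ε i ∈ {1, -1}`. -/
structure GaussDiagram2 (n p q : ℕ) where
  hpq : p + q = 2 * n
  t : Fin n → Fin p ⊕ Fin q
  h : Fin n → Fin p ⊕ Fin q
  inj : Function.Injective (Sum.elim t h)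
  ε : Fin n → ℤ
  sign : ∀ i, ε i = 1 ∨ ε i = -1

namespace GaussDiagram2

variable {n p q : ℕ}

/-- The bijection between arrow-ends and endpoint positions. -/
noncomputable def ends (G : GaussDiagram2 n p q) : (Fin n ⊕ Fin n) ≃ (Fin p ⊕ Fin q) :=
  Equiv.ofBijective (Sum.elim G.t G.h)
    ((Fintype.bijective_iff_injective_and_card _).mpr ⟨G.inj, by
      have := G.hpq; simp only [Fintype.card_sum, Fintype.card_fin]; omega⟩)

/-- The involution `μ` exchanging the tail and the head of each arrow. -/
noncomputable def mu (G : GaussDiagram2 n p q) (x : Fin p ⊕ Fin q) : Fin p ⊕ Fin q :=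
  G.ends (Sum.swap (G.ends.symm x))

/-- `σ x` is the cyclic successor, within its own circle, of `μ x`. -/
noncomputable def sigma (G : GaussDiagram2 n p q) (x : Fin p ⊕ Fin q) : Fin p ⊕ Fin q :=
  Sum.map cycSucc cycSucc (G.mu x)

/-- `G` is one-component iff both circles carry endpoints and `σ` is a single
cycle of length `p + q`. -/
def OneComponent (G : GaussDiagram2 n p q) : Prop :=
  1 ≤ p ∧ 1 ≤ q ∧ ∀ x y : Fin p ⊕ Fin q, ∃ k : ℕ, (G.sigma)^[k] x = y

open Classical in
/-- The visit time of a position: the least `k` with `σ^[k] (inl 0) = x`,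
iterating from position `0` of the first (based) circle
(junk value `0` if there is none or if `p = 0`). -/
noncomputable def tau (G : GaussDiagram2 n p q) (x : Fin p ⊕ Fin q) : ℕ :=
  if hp : 0 < p then
    (if hx : ∃ k : ℕ, (G.sigma)^[k] (Sum.inl ⟨0, hp⟩) = x then Nat.find hx else 0)
  else 0

/-- `G` is ascending iff for every arrow the tail is visited before the head. -/
def Ascending (G : GaussDiagram2 n p q) : Prop :=
  ∀ i : Fin n, G.tau (G.t i) < G.tau (G.h i)

lemma t_injective (G : GaussDiagram2 n p q) : Function.Injective G.t := fun i j hij => by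
  have := @G.inj (Sum.inl i) (Sum.inl j) hij
  simpa using this

lemma h_injective (G : GaussDiagram2 n p q) : Function.Injective G.h := fun i j hij => by
  have := @G.inj (Sum.inr i) (Sum.inr j) hij
  simpa using this

lemma t_ne_h (G : GaussDiagram2 n p q) (i j : Fin n) : G.t i ≠ G.h j := fun e => by
  have := @G.inj (Sum.inl i) (Sum.inr j) e
  simp at this

/-- The set of endpoint positions of the arrows in `S`. -/
def posSet (G : GaussDiagram2 n p q) (S : Finset (Fin n)) : Finset (Fin p ⊕ Fin q) :=
  S.image G.t ∪ S.image G.h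

lemma posSet_card (G : GaussDiagram2 n p q) (S : Finset (Fin n)) :
    (G.posSet S).card = 2 * S.card := by
  rw [posSet, card_union_of_disjoint, card_image_of_injective _ G.t_injective,
    card_image_of_injective _ G.h_injective, two_mul]
  rw [disjoint_left]
  rintro a ha hb
  simp only [mem_image] at ha hb
  obtain ⟨i, -, rfl⟩ := ha
  obtain ⟨j, -, hj⟩ := hb
  exact G.t_ne_h i j hj.symm

lemma mem_posSet_t (G : GaussDiagram2 n p q) {S : Finset (Fin n)} {i : Fin n} (hi : i ∈ S) :
    G.t i ∈ G.posSet S := mem_union_left _ (mem_image_of_mem _ hi)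

lemma mem_posSet_h (G : GaussDiagram2 n p q) {S : Finset (Fin n)} {i : Fin n} (hi : i ∈ S) :
    G.h i ∈ G.posSet S := mem_union_right _ (mem_image_of_mem _ hi)

/-- Order preserving renumbering of the endpoint positions in `E` on each circle. -/
noncomputable def renum (E : Finset (Fin p ⊕ Fin q)) :
    ∀ x ∈ E, Fin E.toLeft.card ⊕ Fin E.toRight.card
  | Sum.inl a, hx => Sum.inl ((E.toLeft.orderIsoOfFin rfl).symm ⟨a, mem_toLeft.mpr hx⟩)
  | Sum.inr b, hx => Sum.inr ((E.toRight.orderIsoOfFin rfl).symm ⟨b, mem_toRight.mpr hx⟩)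

lemma renum_inj (E : Finset (Fin p ⊕ Fin q)) {x y : Fin p ⊕ Fin q} (hx : x ∈ E) (hy : y ∈ E)
    (hxy : renum E x hx = renum E y hy) : x = y := by
  rcases x with a | a <;> rcases y with b | b <;>
    simp only [renum, Sum.inl.injEq, Sum.inr.injEq, reduceCtorEq] at hxy
  · have := congrArg Subtype.val ((OrderIso.injective _) hxy)
    exact congrArg Sum.inl this
  · have := congrArg Subtype.val ((OrderIso.injective _) hxy)
    exact congrArg Sum.inr this

/-- The sub-diagram consisting of the arrows of `S` alone, with the endpoint
positions on each circle renumbered preserving their order. -/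
noncomputable def sub (G : GaussDiagram2 n p q) (S : Finset (Fin n)) :
    GaussDiagram2 S.card (G.posSet S).toLeft.card (G.posSet S).toRight.card where
  hpq := by rw [card_toLeft_add_card_toRight, G.posSet_card]
  t j := renum (G.posSet S) (G.t (S.orderIsoOfFin rfl j))
    (G.mem_posSet_t (S.orderIsoOfFin rfl j).2)
  h j := renum (G.posSet S) (G.h (S.orderIsoOfFin rfl j))
    (G.mem_posSet_h (S.orderIsoOfFin rfl j).2)
  ε j := G.ε (S.orderIsoOfFin rfl j)
  sign j := G.sign _
  inj := by
    have hA : Function.Injective (S.orderIsoOfFin rfl) := OrderIso.injective _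
    rintro (i | i) (j | j) hij <;> simp only [Sum.elim_inl, Sum.elim_inr] at hij <;>
      have h1 := renum_inj _ _ _ hij
    · have h2 := @G.inj (Sum.inl (S.orderIsoOfFin rfl i))
        (Sum.inl (S.orderIsoOfFin rfl j)) h1
      simp only [Sum.inl.injEq] at h2
      exact congrArg Sum.inl (hA (Subtype.ext h2))
    · have h2 := @G.inj (Sum.inl (S.orderIsoOfFin rfl i))
        (Sum.inr (S.orderIsoOfFin rfl j)) h1
      simp at h2
    · have h2 := @G.inj (Sum.inr (S.orderIsoOfFin rfl i))
        (Sum.inl (S.orderIsoOfFin rfl j)) h1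
      simp at h2
    · have h2 := @G.inj (Sum.inr (S.orderIsoOfFin rfl i))
        (Sum.inr (S.orderIsoOfFin rfl j)) h1
      simp only [Sum.inr.injEq] at h2
      exact congrArg Sum.inr (hA (Subtype.ext h2))

/-- A subset `S` of the arrows is one-component if the sub-diagram on `S` is. -/
def OneComponentSub (G : GaussDiagram2 n p q) (S : Finset (Fin n)) : Prop :=
  (G.sub S).OneComponent

/-- A subset `S` of the arrows is ascending if the sub-diagram on `S` is. -/
def AscendingSub (G : GaussDiagram2 n p q) (S : Finset (Fin n)) : Prop :=
  (G.sub S).Ascending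

open Classical in
/-- `F k G` is the sum over all one-component ascending subsets `S` of the
arrows with `|S| = k` of the product of the signs of the arrows in `S`. -/
noncomputable def F (G : GaussDiagram2 n p q) (k : ℕ) : ℤ :=
  ∑ S : Finset (Fin n),
    if S.card = k ∧ G.OneComponentSub S ∧ G.AscendingSub S then ∏ i ∈ S, G.ε i else 0

end GaussDiagram2

/-- Renumbering of the endpoint positions when smoothing a one-circle diagram
along an arrow with endpoints `a < b`: positions `0, …, a-1, b+1, …, 2n-1` go,
in this order, to the first (based) circle and positions `a+1, …, b-1`, in this
cyclic order, to the second circle. -/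
def smoothPos (a b y : ℕ) : ℕ ⊕ ℕ :=
  if y < a then Sum.inl y
  else if y < b then Sum.inr (y - a - 1)
  else Sum.inl (a + (y - b - 1))

namespace SmoothAux

lemma mod_cases' {u v : ℕ} (h : u ≤ v) (hv : 0 < v) :
    (u = v ∧ u % v = 0) ∨ (u < v ∧ u % v = u) := by
  rcases eq_or_lt_of_le h with h' | h'
  · exact Or.inl ⟨h', by simp [h']⟩
  · exact Or.inr ⟨h', Nat.mod_eq_of_lt h'⟩

variable {N a b p q : ℕ}

/-- The renumbering map, with junk value for invalid positions. -/
def phiN (hab : a + 1 < b) (hbN : b < N) (hp : p = a + (N - 1 - b))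
    (hq : q = b - a - 1) (hnd : ¬(a = 0 ∧ b = N - 1)) (y : ℕ) : Fin p ⊕ Fin q :=
  if h1 : y < N ∧ y ≠ a ∧ y ≠ b then
    (if _ : y < a then Sum.inl ⟨y, by omega⟩
     else if _ : y < b then Sum.inr ⟨y - a - 1, by omega⟩
     else Sum.inl ⟨a + (y - b - 1), by omega⟩)
  else Sum.inl ⟨0, by omega⟩

def sNat (N a b z : ℕ) : ℕ :=
  if (z + 1) % N = a then (b + 1) % N else if (z + 1) % N = b then a + 1 else (z + 1) % N

section

variable (hab : a + 1 < b) (hbN : b < N) (hp : p = a + (N - 1 - b))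
    (hq : q = b - a - 1) (hnd : ¬(a = 0 ∧ b = N - 1))

lemma phiN_inj {y z : ℕ} (hy : y < N ∧ y ≠ a ∧ y ≠ b) (hz : z < N ∧ z ≠ a ∧ z ≠ b)
    (h : phiN hab hbN hp hq hnd y = phiN hab hbN hp hq hnd z) : y = z := by
  unfold phiN at h
  rw [dif_pos hy, dif_pos hz] at h
  split_ifs at h <;>
    simp only [Sum.inl.injEq, Sum.inr.injEq, Fin.mk.injEq, reduceCtorEq] at h <;> omega

lemma phiN_surj (v : Fin p ⊕ Fin q) :
    ∃ y, (y < N ∧ y ≠ a ∧ y ≠ b) ∧ phiN hab hbN hp hq hnd y = v := by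
  rcases v with ⟨w, hw⟩ | ⟨w, hw⟩
  · by_cases hwa : w < a
    · exact ⟨w, by omega, by unfold phiN; rw [dif_pos (by omega), dif_pos hwa]⟩
    · refine ⟨b + 1 + (w - a), by omega, ?_⟩
      unfold phiN
      rw [dif_pos (by omega), dif_neg (by omega), dif_neg (by omega)]
      simp only [Sum.inl.injEq, Fin.mk.injEq]
      omega
  · refine ⟨a + 1 + w, by omega, ?_⟩
    unfold phiN
    rw [dif_pos (by omega), dif_neg (by omega), dif_pos (by omega)]
    simp only [Sum.inr.injEq, Fin.mk.injEq]
    omega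

lemma phiN_smoothPos {y : ℕ} (hy : y < N ∧ y ≠ a ∧ y ≠ b) :
    Sum.map Fin.val Fin.val (phiN hab hbN hp hq hnd y) = smoothPos a b y := by
  unfold phiN smoothPos
  rw [dif_pos hy]
  split_ifs <;> simp

include hab hbN hnd in
lemma sNat_valid {z : ℕ} (hz : z < N ∧ z ≠ a ∧ z ≠ b) :
    sNat N a b z < N ∧ sNat N a b z ≠ a ∧ sNat N a b z ≠ b := by
  have e1 := mod_cases' (u := z + 1) (v := N) (by omega) (by omega)
  have e2 := mod_cases' (u := b + 1) (v := N) (by omega) (by omega)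
  unfold sNat
  split_ifs <;> omega

lemma succ_phiN {z : ℕ} (hz : z < N ∧ z ≠ a ∧ z ≠ b) :
    Sum.map cycSucc cycSucc (phiN hab hbN hp hq hnd z)
      = phiN hab hbN hp hq hnd (sNat N a b z) := by
  have e1 := mod_cases' (u := z + 1) (v := N) (by omega) (by omega)
  have e2 := mod_cases' (u := b + 1) (v := N) (by omega) (by omega)
  have hv := sNat_valid hab hbN hnd (N := N) (a := a) (b := b) hz
  unfold phiN
  rw [dif_pos hz, dif_pos hv]
  unfold sNat at hv ⊢
  by_cases c1 : z < a
  · rw [dif_pos c1]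
    simp only [Sum.map_inl, cycSucc]
    have e3 := mod_cases' (u := z + 1) (v := p) (by omega) (by omega)
    split_ifs <;> (try rfl) <;> (try (exfalso; omega)) <;>
      (simp only [Sum.inl.injEq, Sum.inr.injEq, Fin.mk.injEq, reduceCtorEq]) <;> omega
  · by_cases c2 : z < b
    · rw [dif_neg c1, dif_pos c2]
      simp only [Sum.map_inr, cycSucc]
      have e3 := mod_cases' (u := z - a - 1 + 1) (v := q) (by omega) (by omega)
      split_ifs <;> (try rfl) <;> (try (exfalso; omega)) <;>
        (simp only [Sum.inl.injEq, Sum.inr.injEq, Fin.mk.injEq, reduceCtorEq]) <;> omega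
    · rw [dif_neg c1, dif_neg c2]
      simp only [Sum.map_inl, cycSucc]
      have e3 := mod_cases' (u := a + (z - b - 1) + 1) (v := p) (by omega) (by omega)
      split_ifs <;> (try rfl) <;> (try (exfalso; omega)) <;>
        (simp only [Sum.inl.injEq, Sum.inr.injEq, Fin.mk.injEq, reduceCtorEq]) <;> omega

end
end SmoothAux


section Helpers

lemma cycSucc_injective {m : ℕ} : Function.Injective (cycSucc (m := m)) := by
  intro u v h
  have h' : ((u : ℕ) + 1) % m = ((v : ℕ) + 1) % m := congrArg Fin.val h
  have h1 : (u : ℕ) < m := u.isLt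
  have h2 : (v : ℕ) < m := v.isLt
  have e1 := SmoothAux.mod_cases' (u := (u : ℕ) + 1) (v := m) (by omega) (by omega)
  have e2 := SmoothAux.mod_cases' (u := (v : ℕ) + 1) (v := m) (by omega) (by omega)
  exact Fin.ext (by omega)

namespace GaussDiagram

variable {n : ℕ} (G : GaussDiagram n)

lemma mu_t' (i : Fin n) : G.mu (G.t i) = G.h i := by
  have h : G.ends.symm (G.t i) = Sum.inl i := by
    rw [Equiv.symm_apply_eq]; rfl
  simp only [mu, h, Sum.swap_inl]
  rfl

lemma mu_h' (i : Fin n) : G.mu (G.h i) = G.t i := by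
  have h : G.ends.symm (G.h i) = Sum.inr i := by
    rw [Equiv.symm_apply_eq]; rfl
  simp only [mu, h, Sum.swap_inr]
  rfl

lemma mu_mu' (y : Fin (2 * n)) : G.mu (G.mu y) = y := by
  simp only [mu, Equiv.symm_apply_apply, Sum.swap_swap, Equiv.apply_symm_apply]

lemma end_cases (y : Fin (2 * n)) : (∃ j, G.t j = y) ∨ (∃ j, G.h j = y) := by
  obtain ⟨s, hs⟩ := G.ends.surjective y
  cases s with
  | inl j => exact Or.inl ⟨j, hs⟩
  | inr j => exact Or.inr ⟨j, hs⟩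

end GaussDiagram

namespace GaussDiagram2

variable {n p q : ℕ} (G : GaussDiagram2 n p q)

lemma mu_t' (i : Fin n) : G.mu (G.t i) = G.h i := by
  have h : G.ends.symm (G.t i) = Sum.inl i := by
    rw [Equiv.symm_apply_eq]; rfl
  simp only [mu, h, Sum.swap_inl]
  rfl

lemma mu_h' (i : Fin n) : G.mu (G.h i) = G.t i := by
  have h : G.ends.symm (G.h i) = Sum.inr i := by
    rw [Equiv.symm_apply_eq]; rfl
  simp only [mu, h, Sum.swap_inr]
  rfl

lemma mu_injective' : Function.Injective G.mu := by
  intro u v h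
  simp only [mu] at h
  have h1 := G.ends.injective h
  have h2 : G.ends.symm u = G.ends.symm v := by
    have := congrArg Sum.swap h1
    simpa [Sum.swap_swap] using this
  exact G.ends.symm.injective h2

lemma sigma_injective' : Function.Injective G.sigma := by
  intro u v h
  simp only [sigma] at h
  exact G.mu_injective' ((cycSucc_injective.sumMap cycSucc_injective) h)

end GaussDiagram2

namespace SmoothAux

def rctr {N : ℕ} (u : ℕ → Fin N) (a b e k : ℕ) : ℕ :=
  ((Finset.Ico e k).filter (fun j => (u j : ℕ) ≠ a ∧ (u j : ℕ) ≠ b)).card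

lemma rctr_e {N : ℕ} (u : ℕ → Fin N) (a b e : ℕ) : rctr u a b e e = 0 := by
  simp [rctr]

lemma rctr_succ {N : ℕ} (u : ℕ → Fin N) (a b : ℕ) {e k : ℕ} (h : e ≤ k) :
    rctr u a b e (k + 1)
      = rctr u a b e k + (if (u k : ℕ) ≠ a ∧ (u k : ℕ) ≠ b then 1 else 0) := by
  unfold rctr
  rw [Nat.Ico_succ_right_eq_insert_Ico h, Finset.filter_insert]
  split_ifs with hc
  · rw [Finset.card_insert_of_notMem (by simp)]
  · simp

lemma rctr_mono {N : ℕ} (u : ℕ → Fin N) (a b : ℕ) {e k1 k2 : ℕ} (h : k1 ≤ k2) :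
    rctr u a b e k1 ≤ rctr u a b e k2 :=
  Finset.card_le_card (Finset.filter_subset_filter _ (Finset.Ico_subset_Ico le_rfl h))

end SmoothAux

end Helpers

set_option maxHeartbeats 2000000 in
theorem smoothing_oneComponent_ascending {m : ℕ} (G : GaussDiagram (m + 2))
    (h1 : G.OneComponent) (h2 : G.Ascending) (x : Fin (m + 2))
    (a b : ℕ) (ha : a = min (G.t x : ℕ) (G.h x : ℕ)) (hb : b = max (G.t x : ℕ) (G.h x : ℕ)) :
    ∃ G0 : GaussDiagram2 (m + 1) (a + (2 * (m + 2) - 1 - b)) (b - a - 1),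
      (∀ i : Fin (m + 1),
        Sum.map Fin.val Fin.val (G0.t i) = smoothPos a b (G.t (x.succAbove i) : ℕ) ∧
        Sum.map Fin.val Fin.val (G0.h i) = smoothPos a b (G.h (x.succAbove i) : ℕ) ∧
        G0.ε i = G.ε (x.succAbove i)) ∧
      G0.OneComponent ∧ G0.Ascending := by
  classical
  -- basic facts about a and b
  have hvne : (G.t x : ℕ) ≠ (G.h x : ℕ) := fun e => G.t_ne_h x x (Fin.ext e)
  have htl : (G.t x : ℕ) < 2 * (m + 2) := (G.t x).isLt
  have hhl : (G.h x : ℕ) < 2 * (m + 2) := (G.h x).isLt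
  have hA : ((G.t x : ℕ) = a ∧ (G.h x : ℕ) = b) ∨ ((G.t x : ℕ) = b ∧ (G.h x : ℕ) = a) := by
    omega
  have haltb : a < b := by omega
  have hbN : b < 2 * (m + 2) := by omega
  obtain ⟨af, haf⟩ : ∃ af : Fin (2 * (m + 2)), (af : ℕ) = a := ⟨⟨a, by omega⟩, rfl⟩
  obtain ⟨bf, hbf⟩ : ∃ bf : Fin (2 * (m + 2)), (bf : ℕ) = b := ⟨⟨b, by omega⟩, rfl⟩
  obtain ⟨z0, hz0⟩ : ∃ z0 : Fin (2 * (m + 2)), (z0 : ℕ) = 0 := ⟨⟨0, by omega⟩, rfl⟩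
  -- σ has no fixed point
  have hnf : ∀ y : Fin (2 * (m + 2)), G.sigma y ≠ y := by
    intro y hy
    have hit : ∀ k, (G.sigma)^[k] y = y := by
      intro k
      induction k with
      | zero => rfl
      | succ k ih => rw [Function.iterate_succ_apply', ih, hy]
    obtain ⟨w, hw⟩ : ∃ w : Fin (2 * (m + 2)), w ≠ y :=
      ⟨⟨if (y : ℕ) = 0 then 1 else 0, by split <;> omega⟩, by
        intro e
        have := congrArg Fin.val e
        simp only at this
        split at this <;> omega⟩
    obtain ⟨k, hk⟩ := h1 y w
    exact hw (by rw [← hk, hit k])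
  have hmua : G.mu af = bf := by
    rcases hA with ⟨e1, e2⟩ | ⟨e1, e2⟩
    · have h' : af = G.t x := Fin.ext (by omega)
      rw [h', G.mu_t']
      exact Fin.ext (by omega)
    · have h' : af = G.h x := Fin.ext (by omega)
      rw [h', G.mu_h']
      exact Fin.ext (by omega)
  have hmub : G.mu bf = af := by
    rcases hA with ⟨e1, e2⟩ | ⟨e1, e2⟩
    · have h' : bf = G.h x := Fin.ext (by omega)
      rw [h', G.mu_h']
      exact Fin.ext (by omega)
    · have h' : bf = G.t x := Fin.ext (by omega)
      rw [h', G.mu_t']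
      exact Fin.ext (by omega)
  have hsaval : (G.sigma af : ℕ) = (b + 1) % (2 * (m + 2)) := by
    show ((G.mu af : ℕ) + 1) % (2 * (m + 2)) = _
    rw [hmua, hbf]
  have hsbval : (G.sigma bf : ℕ) = (a + 1) % (2 * (m + 2)) := by
    show ((G.mu bf : ℕ) + 1) % (2 * (m + 2)) = _
    rw [hmub, haf]
  have hab : a + 1 < b := by
    by_contra hcon
    apply hnf bf
    apply Fin.ext
    rw [hsbval, hbf, Nat.mod_eq_of_lt (by omega)]
    omega
  have hnd : ¬(a = 0 ∧ b = 2 * (m + 2) - 1) := by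
    rintro ⟨h0, hb1⟩
    apply hnf af
    apply Fin.ext
    rw [hsaval, haf, show b + 1 = 2 * (m + 2) by omega, Nat.mod_self, h0]
  have hp0 : 0 < a + (2 * (m + 2) - 1 - b) := by omega
  have hq0 : 0 < b - a - 1 := by omega
  -- validity of σ af and σ bf
  have hvsa : (G.sigma af : ℕ) ≠ a ∧ (G.sigma af : ℕ) ≠ b := by
    have e2 := SmoothAux.mod_cases' (u := b + 1) (v := 2 * (m + 2)) (by omega) (by omega)
    rw [hsaval]
    omega
  have hvsb : (G.sigma bf : ℕ) ≠ a ∧ (G.sigma bf : ℕ) ≠ b := by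
    rw [hsbval, Nat.mod_eq_of_lt (by omega)]
    omega
  -- validity of endpoints of the remaining arrows
  have hvalid : ∀ j : Fin (m + 2), j ≠ x →
      ((G.t j : ℕ) ≠ a ∧ (G.t j : ℕ) ≠ b) ∧ ((G.h j : ℕ) ≠ a ∧ (G.h j : ℕ) ≠ b) := by
    intro j hj
    have h1t : (G.t j : ℕ) ≠ (G.t x : ℕ) := fun e => hj (G.t_injective (Fin.ext e))
    have h2t : (G.t j : ℕ) ≠ (G.h x : ℕ) := fun e => G.t_ne_h j x (Fin.ext e)
    have h1h : (G.h j : ℕ) ≠ (G.h x : ℕ) := fun e => hj (G.h_injective (Fin.ext e))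
    have h2h : (G.h j : ℕ) ≠ (G.t x : ℕ) := fun e => G.t_ne_h x j (Fin.ext e.symm)
    rcases hA with ⟨e1, e2⟩ | ⟨e1, e2⟩ <;> omega
  -- the renumbering map
  set Φ : ℕ → Fin (a + (2 * (m + 2) - 1 - b)) ⊕ Fin (b - a - 1) :=
    SmoothAux.phiN hab hbN rfl rfl hnd with hΦ
  -- construct the smoothed diagram with defining equations
  obtain ⟨G0, hG0t, hG0h, hG0e⟩ :
      ∃ G0 : GaussDiagram2 (m + 1) (a + (2 * (m + 2) - 1 - b)) (b - a - 1),
        (∀ i, G0.t i = Φ ((G.t (x.succAbove i) : ℕ))) ∧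
        (∀ i, G0.h i = Φ ((G.h (x.succAbove i) : ℕ))) ∧
        (∀ i, G0.ε i = G.ε (x.succAbove i)) := by
    refine ⟨⟨by omega, fun i => Φ ((G.t (x.succAbove i) : ℕ)),
      fun i => Φ ((G.h (x.succAbove i) : ℕ)), ?_, fun i => G.ε (x.succAbove i),
      fun i => G.sign _⟩, fun i => rfl, fun i => rfl, fun i => rfl⟩
    have hvt : ∀ i : Fin (m + 1),
        (G.t (x.succAbove i) : ℕ) < 2 * (m + 2) ∧ (G.t (x.succAbove i) : ℕ) ≠ a ∧
          (G.t (x.succAbove i) : ℕ) ≠ b :=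
      fun i => ⟨(G.t _).isLt, (hvalid _ (Fin.succAbove_ne x i)).1.1,
        (hvalid _ (Fin.succAbove_ne x i)).1.2⟩
    have hvh : ∀ i : Fin (m + 1),
        (G.h (x.succAbove i) : ℕ) < 2 * (m + 2) ∧ (G.h (x.succAbove i) : ℕ) ≠ a ∧
          (G.h (x.succAbove i) : ℕ) ≠ b :=
      fun i => ⟨(G.h _).isLt, (hvalid _ (Fin.succAbove_ne x i)).2.1,
        (hvalid _ (Fin.succAbove_ne x i)).2.2⟩
    have hsA : Function.Injective (x.succAbove) := Fin.succAbove_right_injective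
    rintro (i | i) (j | j) hij <;> simp only [Sum.elim_inl, Sum.elim_inr] at hij <;>
      have h1 := SmoothAux.phiN_inj hab hbN rfl rfl hnd (by first | exact hvt i | exact hvh i)
        (by first | exact hvt j | exact hvh j) hij
    · have h2 := @G.inj (Sum.inl (x.succAbove i)) (Sum.inl (x.succAbove j)) (Fin.ext h1)
      simp only [Sum.inl.injEq] at h2
      exact congrArg Sum.inl (hsA h2)
    · exact absurd (Fin.ext h1 : G.t _ = G.h _) (G.t_ne_h _ _)
    · exact absurd (Fin.ext h1.symm : G.t _ = G.h _) (G.t_ne_h _ _)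
    · have h2 := @G.inj (Sum.inr (x.succAbove i)) (Sum.inr (x.succAbove j)) (Fin.ext h1)
      simp only [Sum.inr.injEq] at h2
      exact congrArg Sum.inr (hsA h2)
  -- the involution and step computations transfer through Φ
  have hmu0 : ∀ y : Fin (2 * (m + 2)), (y : ℕ) ≠ a → (y : ℕ) ≠ b →
      G0.mu (Φ ((y : ℕ))) = Φ ((G.mu y : ℕ)) := by
    intro y hy1 hy2
    rcases G.end_cases y with ⟨j, hj⟩ | ⟨j, hj⟩
    · have hjx : j ≠ x := by
        rintro rfl
        rcases hA with ⟨e1, e2⟩ | ⟨e1, e2⟩ <;> rw [← hj] at hy1 hy2 <;> omega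
      obtain ⟨i, hi⟩ := Fin.exists_succAbove_eq hjx
      rw [← hj, GaussDiagram.mu_t', ← hi, ← hG0t i, ← hG0h i]
      exact G0.mu_t' i
    · have hjx : j ≠ x := by
        rintro rfl
        rcases hA with ⟨e1, e2⟩ | ⟨e1, e2⟩ <;> rw [← hj] at hy1 hy2 <;> omega
      obtain ⟨i, hi⟩ := Fin.exists_succAbove_eq hjx
      rw [← hj, GaussDiagram.mu_h', ← hi, ← hG0t i, ← hG0h i]
      exact G0.mu_h' i
  have hstep : ∀ y : Fin (2 * (m + 2)), (y : ℕ) ≠ a → (y : ℕ) ≠ b →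
      ((G.sigma y : ℕ) ≠ a ∧ (G.sigma y : ℕ) ≠ b ∧
          G0.sigma (Φ ((y : ℕ))) = Φ ((G.sigma y : ℕ))) ∨
        (((G.sigma y : ℕ) = a ∨ (G.sigma y : ℕ) = b) ∧
          (G.sigma (G.sigma y) : ℕ) ≠ a ∧ (G.sigma (G.sigma y) : ℕ) ≠ b ∧
          G0.sigma (Φ ((y : ℕ))) = Φ ((G.sigma (G.sigma y) : ℕ))) := by
    intro y hy1 hy2
    have hmz : (G.mu y : ℕ) ≠ a ∧ (G.mu y : ℕ) ≠ b := by
      constructor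
      · intro e'
        have hmy : G.mu y = af := Fin.ext (by omega)
        have h' : y = bf := by rw [← G.mu_mu' y, hmy, hmua]
        exact hy2 (by rw [h', hbf])
      · intro e'
        have hmy : G.mu y = bf := Fin.ext (by omega)
        have h' : y = af := by rw [← G.mu_mu' y, hmy, hmub]
        exact hy1 (by rw [h', haf])
    have hsig0 : G0.sigma (Φ ((y : ℕ)))
        = Φ (SmoothAux.sNat (2 * (m + 2)) a b ((G.mu y : ℕ))) := by
      show Sum.map cycSucc cycSucc (G0.mu (Φ ((y : ℕ)))) = _
      rw [hmu0 y hy1 hy2, hΦ]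
      exact SmoothAux.succ_phiN hab hbN rfl rfl hnd ⟨(G.mu y).isLt, hmz.1, hmz.2⟩
    have hw : ((G.mu y : ℕ) + 1) % (2 * (m + 2)) = (G.sigma y : ℕ) := rfl
    by_cases hca : (G.sigma y : ℕ) = a
    · right
      have hyaf : G.sigma y = af := Fin.ext (by omega)
      refine ⟨Or.inl hca, by rw [hyaf]; exact hvsa.1, by rw [hyaf]; exact hvsa.2, ?_⟩
      rw [hsig0]
      congr 1
      unfold SmoothAux.sNat
      rw [hw, if_pos hca, hyaf, hsaval]
    · by_cases hcb : (G.sigma y : ℕ) = b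
      · right
        have hybf : G.sigma y = bf := Fin.ext (by omega)
        refine ⟨Or.inr hcb, by rw [hybf]; exact hvsb.1, by rw [hybf]; exact hvsb.2, ?_⟩
        rw [hsig0]
        congr 1
        unfold SmoothAux.sNat
        rw [hw, if_neg hca, if_pos hcb, hybf, hsbval, Nat.mod_eq_of_lt (by omega)]
      · left
        refine ⟨hca, hcb, ?_⟩
        rw [hsig0]
        congr 1
        unfold SmoothAux.sNat
        rw [hw, if_neg hca, if_neg hcb]
  -- the orbit of the base point and the reindexing function r
  set u : ℕ → Fin (2 * (m + 2)) := fun k => (G.sigma)^[k] z0 with hu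
  set e : ℕ := if a = 0 then 1 else 0 with he
  set r : ℕ → ℕ := SmoothAux.rctr u a b e with hr
  set i0 : Fin (a + (2 * (m + 2) - 1 - b)) ⊕ Fin (b - a - 1) := Sum.inl ⟨0, hp0⟩ with hi0
  have hrsucc : ∀ k, e ≤ k →
      r (k + 1) = r k + (if (u k : ℕ) ≠ a ∧ (u k : ℕ) ≠ b then 1 else 0) := by
    intro k hk
    rw [hr]
    exact SmoothAux.rctr_succ u a b hk
  have hre : r e = 0 := by rw [hr]; exact SmoothAux.rctr_e u a b e
  have hrmono : ∀ k1 k2, k1 ≤ k2 → r k1 ≤ r k2 := by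
    intro k1 k2 h
    rw [hr]
    exact SmoothAux.rctr_mono u a b h
  have hnext : ∀ k, u (k + 1) = G.sigma (u k) := by
    intro k
    rw [hu]
    simp [Function.iterate_succ_apply']
  have hue : (u e : ℕ) ≠ a ∧ (u e : ℕ) ≠ b ∧ Φ ((u e : ℕ)) = i0 := by
    by_cases h0 : a = 0
    · have he1 : e = 1 := by rw [he, if_pos h0]
      have hz0af : z0 = af := Fin.ext (by omega)
      have hu1 : u e = G.sigma af := by
        rw [he1, hu]
        simp [hz0af]
      have hval : (u e : ℕ) = b + 1 := by
        rw [hu1, hsaval, Nat.mod_eq_of_lt (by omega)]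
      refine ⟨by omega, by omega, ?_⟩
      rw [hval, hΦ, hi0]
      unfold SmoothAux.phiN
      rw [dif_pos (by omega), dif_neg (by omega), dif_neg (by omega)]
      simp only [Sum.inl.injEq, Fin.mk.injEq]
      omega
    · have he0 : e = 0 := by rw [he, if_neg h0]
      have hu0 : (u e : ℕ) = 0 := by
        rw [he0, hu]
        simpa using hz0
      refine ⟨by omega, by omega, ?_⟩
      rw [hu0, hΦ, hi0]
      unfold SmoothAux.phiN
      rw [dif_pos (by omega), dif_pos (by omega)]
  have lemA : ∀ k, e ≤ k → (u k : ℕ) ≠ a → (u k : ℕ) ≠ b →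
      (G0.sigma)^[r k] i0 = Φ ((u k : ℕ)) := by
    intro k
    induction k using Nat.strong_induction_on with
    | _ k IH =>
      intro hek hva hvb
      by_cases hke : k = e
      · subst hke
        rw [hre, Function.iterate_zero_apply]
        exact hue.2.2.symm
      · obtain ⟨k', rfl⟩ : ∃ k', k = k' + 1 := ⟨k - 1, by omega⟩
        have hek' : e ≤ k' := by omega
        by_cases hv' : (u k' : ℕ) ≠ a ∧ (u k' : ℕ) ≠ b
        · have hrk : r (k' + 1) = r k' + 1 := by rw [hrsucc k' hek', if_pos hv']
          rw [hrk, Function.iterate_succ_apply', IH k' (by omega) hek' hv'.1 hv'.2]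
          rcases hstep (u k') hv'.1 hv'.2 with ⟨_, _, heq⟩ | ⟨hcase, _⟩
          · rw [hnext k']
            exact heq
          · exfalso
            rcases hcase with hc | hc <;> rw [← hnext k'] at hc
            · exact hva hc
            · exact hvb hc
        · have hv'' : (u k' : ℕ) = a ∨ (u k' : ℕ) = b := by tauto
          have hk'e : k' ≠ e := by
            intro h'
            rw [h'] at hv''
            rcases hv'' with h'' | h''
            · exact hue.1 h''
            · exact hue.2.1 h''
          obtain ⟨k'', rfl⟩ : ∃ k'', k' = k'' + 1 := ⟨k' - 1, by omega⟩
          have hek'' : e ≤ k'' := by omega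
          have hv2 : (u k'' : ℕ) ≠ a ∧ (u k'' : ℕ) ≠ b := by
            constructor
            · intro e'
              have h3 : u (k'' + 1) = G.sigma af := by
                rw [hnext]
                congr 1
                exact Fin.ext (by omega)
              rcases hv'' with h'' | h'' <;> rw [h3] at h''
              · exact hvsa.1 h''
              · exact hvsa.2 h''
            · intro e'
              have h3 : u (k'' + 1) = G.sigma bf := by
                rw [hnext]
                congr 1
                exact Fin.ext (by omega)
              rcases hv'' with h'' | h'' <;> rw [h3] at h''
              · exact hvsb.1 h''
              · exact hvsb.2 h''
          have hr2 : r (k'' + 1 + 1) = r k'' + 1 := by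
            rw [hrsucc (k'' + 1) (by omega), hrsucc k'' hek'', if_pos hv2, if_neg hv']
          rw [hr2, Function.iterate_succ_apply', IH k'' (by omega) hek'' hv2.1 hv2.2]
          rcases hstep (u k'') hv2.1 hv2.2 with ⟨hna, hnb, _⟩ | ⟨_, _, _, heq⟩
          · exfalso
            rw [← hnext k''] at hna hnb
            tauto
          · rw [hnext (k'' + 1), hnext k'']
            exact heq
  have lemB : ∀ k, e ≤ k → ∀ j, j < r k → ∃ k3, e ≤ k3 ∧ k3 < k ∧
      (u k3 : ℕ) ≠ a ∧ (u k3 : ℕ) ≠ b ∧ r k3 = j := by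
    intro k
    induction k using Nat.strong_induction_on with
    | _ k IH =>
      intro hek j hj
      by_cases hke : k = e
      · subst hke
        rw [hre] at hj
        omega
      · obtain ⟨k', rfl⟩ : ∃ k', k = k' + 1 := ⟨k - 1, by omega⟩
        have hek' : e ≤ k' := by omega
        have hsucc := hrsucc k' hek'
        by_cases hv' : (u k' : ℕ) ≠ a ∧ (u k' : ℕ) ≠ b
        · rw [if_pos hv'] at hsucc
          by_cases hjr : j < r k'
          · obtain ⟨k3, h3⟩ := IH k' (by omega) hek' j hjr
            exact ⟨k3, h3.1, by omega, h3.2.2⟩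
          · exact ⟨k', hek', by omega, hv'.1, hv'.2, by omega⟩
        · rw [if_neg hv'] at hsucc
          obtain ⟨k3, h3⟩ := IH k' (by omega) hek' j (by omega)
          exact ⟨k3, h3.1, by omega, h3.2.2⟩
  have htau : ∀ y : Fin (2 * (m + 2)), u (G.tau y) = y ∧ ∀ j, j < G.tau y → u j ≠ y := by
    intro y
    have hx : ∃ k, (G.sigma)^[k] z0 = y := h1 z0 y
    have ht : G.tau y = Nat.find hx := by
      simp only [GaussDiagram.tau]
      rw [show (⟨0, y.pos⟩ : Fin (2 * (m + 2))) = z0 from Fin.ext (by rw [hz0])]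
      rw [dif_pos hx]
    constructor
    · rw [ht, hu]
      exact Nat.find_spec hx
    · intro j hj huj
      rw [ht] at hj
      exact Nat.find_min hx hj (by rw [← huj, hu])
  have hek : ∀ y : Fin (2 * (m + 2)), (y : ℕ) ≠ a → e ≤ G.tau y := by
    intro y hy
    by_cases h0 : a = 0
    · rw [he, if_pos h0]
      by_contra hc
      have h' : G.tau y = 0 := by omega
      have hy0 := (htau y).1
      rw [h'] at hy0
      have : (y : ℕ) = 0 := by
        rw [← hy0, hu]
        simpa using hz0
      omega
    · rw [he, if_neg h0]
      omega
  have htau0 : ∀ y : Fin (2 * (m + 2)), (y : ℕ) ≠ a → (y : ℕ) ≠ b →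
      G0.tau (Φ ((y : ℕ))) = r (G.tau y) := by
    intro y hy1 hy2
    obtain ⟨hspec, hmin⟩ := htau y
    have hkey : e ≤ G.tau y := hek y hy1
    have hvk : (u (G.tau y) : ℕ) ≠ a ∧ (u (G.tau y) : ℕ) ≠ b := by
      rw [hspec]
      exact ⟨hy1, hy2⟩
    have hAk := lemA (G.tau y) hkey hvk.1 hvk.2
    rw [hspec] at hAk
    have hex0 : ∃ k', (G0.sigma)^[k'] i0 = Φ ((y : ℕ)) := ⟨_, hAk⟩
    have ht0 : G0.tau (Φ ((y : ℕ))) = Nat.find hex0 := by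
      simp only [GaussDiagram2.tau]
      rw [dif_pos hp0, ← hi0, dif_pos hex0]
    rw [ht0, Nat.find_eq_iff]
    refine ⟨hAk, ?_⟩
    intro j hj hcon
    obtain ⟨k3, hk3e, hk3lt, hk3a, hk3b, hk3r⟩ := lemB (G.tau y) hkey j hj
    have hA3 := lemA k3 hk3e hk3a hk3b
    rw [hk3r] at hA3
    rw [hA3, hΦ] at hcon
    have hval := SmoothAux.phiN_inj hab hbN rfl rfl hnd ⟨(u k3).isLt, hk3a, hk3b⟩
      ⟨y.isLt, hy1, hy2⟩ hcon
    exact hmin k3 hk3lt (Fin.ext hval)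
  have hreach : ∀ v : Fin (a + (2 * (m + 2) - 1 - b)) ⊕ Fin (b - a - 1),
      ∃ k', (G0.sigma)^[k'] i0 = v := by
    intro v
    obtain ⟨y, hyv, hyphi⟩ := SmoothAux.phiN_surj hab hbN rfl rfl hnd v
    obtain ⟨yF, hyF⟩ : ∃ yF : Fin (2 * (m + 2)), (yF : ℕ) = y := ⟨⟨y, hyv.1⟩, rfl⟩
    have h1' : (yF : ℕ) ≠ a := by omega
    have h2' : (yF : ℕ) ≠ b := by omega
    refine ⟨r (G.tau yF), ?_⟩
    obtain ⟨hspec, -⟩ := htau yF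
    have hAk := lemA (G.tau yF) (hek yF h1') (by rw [hspec]; exact h1')
      (by rw [hspec]; exact h2')
    rw [hspec, hyF, hΦ, hyphi] at hAk
    exact hAk
  refine ⟨G0, ?_, ?_, ?_⟩
  · -- endpoints and signs agree with the smoothing
    intro i
    have hne := Fin.succAbove_ne x i
    refine ⟨?_, ?_, hG0e i⟩
    · rw [hG0t i, hΦ]
      exact SmoothAux.phiN_smoothPos hab hbN rfl rfl hnd
        ⟨(G.t _).isLt, (hvalid _ hne).1.1, (hvalid _ hne).1.2⟩
    · rw [hG0h i, hΦ]
      exact SmoothAux.phiN_smoothPos hab hbN rfl rfl hnd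
        ⟨(G.h _).isLt, (hvalid _ hne).2.1, (hvalid _ hne).2.2⟩
  · -- one-component
    refine ⟨by omega, by omega, ?_⟩
    intro w v
    obtain ⟨l, hl⟩ := hreach w
    obtain ⟨k', hk'⟩ := hreach v
    have hinj : Function.Injective G0.sigma := G0.sigma_injective'
    obtain ⟨i, j, hne, hij⟩ :=
      Finite.exists_ne_map_eq_of_infinite (f := fun k : ℕ => (G0.sigma)^[k] w)
    have hij' : (G0.sigma)^[i] w = (G0.sigma)^[j] w := hij
    have hcyc : ∃ c, 0 < c ∧ (G0.sigma)^[c] w = w := by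
      rcases Nat.lt_trichotomy i j with hlt | heq | hlt
      · refine ⟨j - i, by omega, ?_⟩
        apply Function.Injective.iterate hinj i
        rw [← Function.iterate_add_apply, show i + (j - i) = j by omega]
        exact hij'.symm
      · exact absurd heq hne
      · refine ⟨i - j, by omega, ?_⟩
        apply Function.Injective.iterate hinj j
        rw [← Function.iterate_add_apply, show j + (i - j) = i by omega]
        exact hij'
    obtain ⟨c, hc0, hc⟩ := hcyc
    have hfix : (G0.sigma)^[c * l] w = w := by
      rw [Function.iterate_mul]
      exact Function.iterate_fixed hc l
    have hle : l ≤ c * l := Nat.le_mul_of_pos_left l hc0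
    have hback : (G0.sigma)^[c * l - l] w = i0 := by
      apply Function.Injective.iterate hinj l
      rw [← Function.iterate_add_apply, show l + (c * l - l) = c * l by omega, hfix, hl]
    exact ⟨k' + (c * l - l), by rw [Function.iterate_add_apply, hback, hk']⟩
  · -- ascending
    intro i
    have hne := Fin.succAbove_ne x i
    have hvt := (hvalid _ hne).1
    have hvh := (hvalid _ hne).2
    rw [hG0t i, hG0h i, htau0 _ hvt.1 hvt.2, htau0 _ hvh.1 hvh.2]
    have hlt : G.tau (G.t (x.succAbove i)) < G.tau (G.h (x.succAbove i)) := h2 (x.succAbove i)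
    have hket : e ≤ G.tau (G.t (x.succAbove i)) := hek _ hvt.1
    have hvut : (u (G.tau (G.t (x.succAbove i))) : ℕ) ≠ a ∧
        (u (G.tau (G.t (x.succAbove i))) : ℕ) ≠ b := by
      rw [(htau _).1]
      exact hvt
    have hs1 : r (G.tau (G.t (x.succAbove i)) + 1) = r (G.tau (G.t (x.succAbove i))) + 1 := by
      rw [hrsucc _ hket, if_pos hvut]
    have hs2 : r (G.tau (G.t (x.succAbove i)) + 1) ≤ r (G.tau (G.h (x.succAbove i))) :=
      hrmono _ _ (by omega)
    omega
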